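/- For a simple connected graph G on n ≥ 2 vertices with minimum degree δ, ξ_c(G) ≥ (2·δ^2/(n-1))·W(G), where W(G) = (1/2)·Σ_{v∈V} D(v) is the Wiener index and D(v) = Σ_{u∈V} d(v,u), with equality if and only if G ≅ K_n. -/

import Mathlib

open Finset

variable {V : Type*} [Fintype V] [DecidableEq V]

/-- Eccentricity of a vertex: the largest distance to any vertex. -/
noncomputable def eccent (G : SimpleGraph V) (v : V) : ℕ := univ.sup (G.dist v)

/-- `ndegSum G v` is `δ(v)`: the sum of degrees of the neighbors of `v`. -/
def ndegSum (G : SimpleGraph V) [DecidableRel G.Adj] (v : V) : ℕ :=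
  ∑ u ∈ G.neighborFinset v, G.degree u

/-- The modified eccentric connectivity index `ξ_c(G)`. -/
noncomputable def xiC (G : SimpleGraph V) [DecidableRel G.Adj] : ℕ :=
  ∑ v, ndegSum G v * eccent G v

/-- The eccentric connectivity index `ξ^c(G)`. -/
noncomputable def eccIndex (G : SimpleGraph V) [DecidableRel G.Adj] : ℕ :=
  ∑ v, G.degree v * eccent G v

/-- The first Zagreb index `M₁(G)`. -/
def M1 (G : SimpleGraph V) [DecidableRel G.Adj] : ℕ := ∑ v, G.degree v ^ 2

noncomputable def minDeg (G : SimpleGraph V) [DecidableRel G.Adj] : ℕ := sInf (Set.range (fun v => G.degree v))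

/-- `distSum G v = D(v)`, the sum of distances from `v` to all vertices. -/
noncomputable def distSum (G : SimpleGraph V) (v : V) : ℕ := ∑ u, G.dist v u

/-- Twice the Wiener index `2·W(G) = Σ_v D(v)`. -/
noncomputable def twoWiener (G : SimpleGraph V) : ℕ := ∑ v, distSum G v

section aux

variable (G : SimpleGraph V) [DecidableRel G.Adj]

lemma minDeg_le_degree (v : V) : minDeg G ≤ G.degree v := Nat.sInf_le ⟨v, rfl⟩

lemma exists_adj_of_connected (hG : G.Connected) (hn : 2 ≤ Fintype.card V) (v : V) :
    ∃ u, G.Adj v u := by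
  obtain ⟨u, hu⟩ := Fintype.exists_ne_of_one_lt_card (by omega) v
  have hd : 0 < G.dist v u := hG.pos_dist_of_ne (Ne.symm hu)
  obtain ⟨p, hp⟩ := SimpleGraph.exists_walk_of_dist_ne_zero (G := G) (u := v) (v := u)
    (by omega)
  cases p with
  | nil => simp at hu
  | cons h _ => exact ⟨_, h⟩

lemma one_le_minDeg (hG : G.Connected) (hn : 2 ≤ Fintype.card V) : 1 ≤ minDeg G := by
  have : Nonempty V := hG.nonempty
  obtain ⟨w, hw⟩ := Nat.sInf_mem (Set.range_nonempty (f := fun v => G.degree v))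
  obtain ⟨u, hu⟩ := exists_adj_of_connected G hG hn w
  have : 0 < G.degree w := G.degree_pos_iff_exists_adj w |>.2 ⟨u, hu⟩
  rw [minDeg, ← hw]; exact this

lemma dist_le_eccent (v u : V) : G.dist v u ≤ eccent G v := Finset.le_sup (mem_univ u)

lemma distSum_eq_erase (v : V) : distSum G v = ∑ u ∈ univ.erase v, G.dist v u := by
  rw [distSum, ← Finset.sum_erase_add univ _ (mem_univ v)]
  simp

lemma distSum_le (v : V) : distSum G v ≤ (Fintype.card V - 1) * eccent G v := by
  rw [distSum_eq_erase]
  calc ∑ u ∈ univ.erase v, G.dist v u ≤ (univ.erase v).card • eccent G v :=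
        Finset.sum_le_card_nsmul _ _ _ (fun u _ => dist_le_eccent G v u)
    _ = (Fintype.card V - 1) * eccent G v := by
        rw [Finset.card_erase_of_mem (mem_univ v), Finset.card_univ, smul_eq_mul]

lemma minDeg_sq_le_ndegSum (v : V) : minDeg G ^ 2 ≤ ndegSum G v := by
  have h1 : (G.neighborFinset v).card • minDeg G ≤ ndegSum G v :=
    Finset.card_nsmul_le_sum _ _ _ (fun u _ => minDeg_le_degree G u)
  rw [G.card_neighborFinset_eq_degree, smul_eq_mul] at h1
  calc minDeg G ^ 2 = minDeg G * minDeg G := sq (minDeg G)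
    _ ≤ G.degree v * minDeg G := Nat.mul_le_mul_right _ (minDeg_le_degree G v)
    _ ≤ ndegSum G v := h1

lemma distSum_pos (hG : G.Connected) (hn : 2 ≤ Fintype.card V) (v : V) :
    0 < distSum G v := by
  obtain ⟨u, hu⟩ := Fintype.exists_ne_of_one_lt_card (by omega) v
  have hd : 0 < G.dist v u := hG.pos_dist_of_ne (Ne.symm hu)
  exact Finset.sum_pos' (fun i _ => Nat.zero_le _) ⟨u, mem_univ u, hd⟩

end aux

theorem wiener_lower_bound (G : SimpleGraph V) [DecidableRel G.Adj]
    (hG : G.Connected) (hn : 2 ≤ Fintype.card V) :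
    minDeg G ^ 2 * twoWiener G ≤ (Fintype.card V - 1) * xiC G ∧
      ((Fintype.card V - 1) * xiC G = minDeg G ^ 2 * twoWiener G ↔ G = ⊤) := by
  set n := Fintype.card V with hncard
  have hterm : ∀ v, minDeg G ^ 2 * distSum G v ≤ (n - 1) * (ndegSum G v * eccent G v) := by
    intro v
    calc minDeg G ^ 2 * distSum G v ≤ ndegSum G v * distSum G v :=
          Nat.mul_le_mul_right _ (minDeg_sq_le_ndegSum G v)
      _ ≤ ndegSum G v * ((n - 1) * eccent G v) :=
          Nat.mul_le_mul_left _ (distSum_le G v)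
      _ = (n - 1) * (ndegSum G v * eccent G v) := by ring
  have hle : minDeg G ^ 2 * twoWiener G ≤ (n - 1) * xiC G := by
    rw [twoWiener, xiC, Finset.mul_sum, Finset.mul_sum]
    exact Finset.sum_le_sum fun v _ => hterm v
  refine ⟨hle, ?_, ?_⟩
  · -- equality → G = ⊤
    intro heq
    have heq' : ∑ v, minDeg G ^ 2 * distSum G v = ∑ v, (n - 1) * (ndegSum G v * eccent G v) := by
      rw [← Finset.mul_sum, ← Finset.mul_sum, ← twoWiener, ← xiC, heq]
    have hall := (Finset.sum_eq_sum_iff_of_le (fun v _ => hterm v)).1 heq'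
    have hadj : ∀ v u : V, u ≠ v → G.Adj v u := by
      intro v u huv
      have hv := hall v (mem_univ v)
      have hnds : 0 < ndegSum G v :=
        lt_of_lt_of_le (by have := one_le_minDeg G hG hn; nlinarith) (minDeg_sq_le_ndegSum G v)
      -- deduce distSum G v = (n-1) * eccent G v
      have h2 : ndegSum G v * distSum G v = ndegSum G v * ((n - 1) * eccent G v) := by
        have a1 : minDeg G ^ 2 * distSum G v ≤ ndegSum G v * distSum G v :=
          Nat.mul_le_mul_right _ (minDeg_sq_le_ndegSum G v)
        have a2 : ndegSum G v * distSum G v ≤ ndegSum G v * ((n - 1) * eccent G v) :=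
          Nat.mul_le_mul_left _ (distSum_le G v)
        have a3 : ndegSum G v * ((n - 1) * eccent G v) = minDeg G ^ 2 * distSum G v := by
          rw [hv]; ring
        omega
      have hD : distSum G v = (n - 1) * eccent G v := Nat.eq_of_mul_eq_mul_left hnds h2
      have hdisteq : ∀ u ∈ univ.erase v, G.dist v u = eccent G v := by
        by_contra hcon
        push_neg at hcon
        obtain ⟨w, hw, hwne⟩ := hcon
        have hlt : ∑ u ∈ univ.erase v, G.dist v u < ∑ _u ∈ univ.erase v, eccent G v :=
          Finset.sum_lt_sum (fun u _ => dist_le_eccent G v u)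
            ⟨w, hw, lt_of_le_of_ne (dist_le_eccent G v w) hwne⟩
        rw [Finset.sum_const, Finset.card_erase_of_mem (mem_univ v), Finset.card_univ,
          smul_eq_mul, ← hncard, ← hD, ← distSum_eq_erase] at hlt
        omega
      obtain ⟨w, hwadj⟩ := exists_adj_of_connected G hG hn v
      have hecc1 : eccent G v = 1 := by
        have := hdisteq w (Finset.mem_erase.2 ⟨hwadj.ne', mem_univ w⟩)
        rw [← this, SimpleGraph.dist_eq_one_iff_adj]
        exact hwadj
      have := hdisteq u (Finset.mem_erase.2 ⟨huv, mem_univ u⟩)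
      rw [hecc1, SimpleGraph.dist_eq_one_iff_adj] at this
      exact this
    ext v u
    simp only [SimpleGraph.top_adj]
    exact ⟨fun h => h.ne, fun h => hadj v u (Ne.symm h)⟩
  · -- G = ⊤ → equality
    intro heq
    subst heq
    have hnbr : ∀ v : V, (⊤ : SimpleGraph V).neighborFinset v = univ.erase v := by
      intro v
      ext u
      simp only [SimpleGraph.mem_neighborFinset, SimpleGraph.top_adj, Finset.mem_erase,
        Finset.mem_univ, and_true]
      exact ne_comm
    have hdeg : ∀ v : V, (⊤ : SimpleGraph V).degree v = n - 1 := by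
      intro v
      rw [← SimpleGraph.card_neighborFinset_eq_degree, hnbr,
        Finset.card_erase_of_mem (mem_univ v), Finset.card_univ]
    have hdist : ∀ v u : V, u ≠ v → (⊤ : SimpleGraph V).dist v u = 1 := fun v u h =>
      SimpleGraph.dist_eq_one_iff_adj.2 (by simp [Ne.symm h])
    have hecc : ∀ v : V, eccent (⊤ : SimpleGraph V) v = 1 := by
      intro v
      obtain ⟨u, hu⟩ := Fintype.exists_ne_of_one_lt_card (by omega) v
      apply le_antisymm
      · refine Finset.sup_le fun u _ => ?_
        rcases eq_or_ne u v with rfl | h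
        · rw [SimpleGraph.dist_self]; omega
        · rw [hdist v u h]
      · rw [← hdist v u hu]
        exact Finset.le_sup (mem_univ u)
    have hDS : ∀ v : V, distSum (⊤ : SimpleGraph V) v = n - 1 := by
      intro v
      rw [distSum_eq_erase, Finset.sum_congr rfl (fun u hu => hdist v u (Finset.mem_erase.1 hu).1),
        Finset.sum_const, Finset.card_erase_of_mem (mem_univ v), Finset.card_univ, smul_eq_mul,
        mul_one]
    have hnds : ∀ v : V, ndegSum (⊤ : SimpleGraph V) v = (n - 1) * (n - 1) := by
      intro v
      calc ndegSum (⊤ : SimpleGraph V) v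
          = ∑ _u ∈ (⊤ : SimpleGraph V).neighborFinset v, (n - 1) :=
            Finset.sum_congr rfl (fun u _ => hdeg u)
        _ = ((⊤ : SimpleGraph V).neighborFinset v).card * (n - 1) := by
            rw [Finset.sum_const, smul_eq_mul]
        _ = (n - 1) * (n - 1) := by
            rw [SimpleGraph.card_neighborFinset_eq_degree, hdeg]
    have hmd : minDeg (⊤ : SimpleGraph V) = n - 1 := by
      have : Nonempty V := hG.nonempty
      have : Set.range (fun v => (⊤ : SimpleGraph V).degree v) = {n - 1} := by
        ext k
        simp only [Set.mem_range, Set.mem_singleton_iff]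
        exact ⟨fun ⟨v, hv⟩ => hv ▸ hdeg v, fun h => ⟨Classical.arbitrary V, (hdeg _).trans h.symm⟩⟩
      rw [minDeg, this, csInf_singleton]
    rw [xiC, twoWiener]
    simp only [hecc, hDS, hnds, hmd, mul_one, Finset.sum_const, Finset.card_univ, smul_eq_mul,
      ← hncard]
    ring
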